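/- Let X and Y be real Banach spaces, k ∈ ℕ, p ≥ 1, and let μ be a finite Borel measure on X × X^k satisfying the Radon–Nikodym domination assumption. Let (𝒩_{N,N'}) be a family of finite-dimensional approximators with the Sobolev density property. Let F : X → Y be k-times continuously Fréchet differentiable with ‖F‖_{W^{k,p}_{B,μ}} < ∞, and suppose there exists a sequence of cylindrical maps G_n = D_n ∘ f_n ∘ E_n (with E_n : X → ℝ^{N_n} and D_n : ℝ^{N_n'} → Y continuous linear and f_n : ℝ^{N_n} → ℝ^{N_n'} k-times continuously differentiable) such that max_{0 ≤ i ≤ k} ∫ ‖D^i f_n(y)‖^p d((E_n)_# μ^0)(y) < ∞ for each n and ‖F − G_n‖_{W^{k,p}_{B,μ}} → 0 as n → ∞. Then for every ε > 0 there exist N, N' ∈ ℕ, continuous linear maps E : X → ℝ^N and D : ℝ^{N'} → Y, and f ∈ 𝒩_{N,N'} such that ‖F − D ∘ f ∘ E‖_{W^{k,p}_{B,μ}} < ε. -/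

import Mathlib

open MeasureTheory Filter
open scoped Topology ENNReal NNReal

/-- The marginal `μ^{0:i}` on `X × X^i` of a measure `μ` on `X × X^k`, for `i ≤ k`. -/
noncomputable def marginalUpTo {X : Type*} [MeasurableSpace X] {k : ℕ}
    (μ : Measure (X × (Fin k → X))) (i : ℕ) (hik : i ≤ k) :
    Measure (X × (Fin i → X)) :=
  μ.map fun z => (z.1, fun j => z.2 (Fin.castLE hik j))

section Aux

lemma aux_dom {α β : Type*} [MeasurableSpace α] [MeasurableSpace β]
    (ν : Measure (α × β)) (ρ : Measure α) (w : α × β → ℝ≥0∞) (hw : Measurable w)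
    (c : ℝ≥0∞)
    (hdom : ∀ A : Set α, MeasurableSet A → ∫⁻ z in Prod.fst ⁻¹' A, w z ∂ν ≤ c * ρ A)
    (φ : α → ℝ≥0∞) (hφ : Measurable φ) :
    ∫⁻ z, φ z.1 * w z ∂ν ≤ c * ∫⁻ x, φ x ∂ρ := by
  have hmap : (ν.withDensity w).map Prod.fst ≤ c • ρ := by
    refine Measure.le_iff.2 fun A hA => ?_
    rw [Measure.map_apply measurable_fst hA, withDensity_apply _ (measurable_fst hA)]
    simpa using hdom A hA
  calc ∫⁻ z, φ z.1 * w z ∂ν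
      = ∫⁻ z, w z * φ z.1 ∂ν := lintegral_congr fun z => mul_comm _ _
    _ = ∫⁻ z, φ z.1 ∂(ν.withDensity w) := by
        have := lintegral_withDensity_eq_lintegral_mul ν hw (hφ.comp measurable_fst)
        simp only [Function.comp, Pi.mul_apply] at this
        rw [this]
    _ = ∫⁻ x, φ x ∂((ν.withDensity w).map Prod.fst) :=
        (lintegral_map hφ measurable_fst).symm
    _ ≤ ∫⁻ x, φ x ∂(c • ρ) := lintegral_mono' hmap le_rfl
    _ = c * ∫⁻ x, φ x ∂ρ := by simp [lintegral_smul_measure]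

lemma aux_rpow_add {p : ℝ} (hp : 0 ≤ p) (a b : ℝ≥0∞) :
    (a + b) ^ p ≤ 2 ^ p * a ^ p + 2 ^ p * b ^ p := by
  have h1 : a + b ≤ 2 * max a b := by
    rw [two_mul]
    exact add_le_add (le_max_left a b) (le_max_right a b)
  calc (a + b) ^ p ≤ (2 * max a b) ^ p := ENNReal.rpow_le_rpow h1 hp
    _ = 2 ^ p * (max a b) ^ p := ENNReal.mul_rpow_of_nonneg _ _ hp
    _ ≤ 2 ^ p * (a ^ p + b ^ p) := by
        gcongr
        rcases max_cases a b with ⟨h, _⟩ | ⟨h, _⟩ <;> rw [h]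
        · exact le_add_right (le_refl _)
        · exact le_add_left (le_refl _)
    _ = 2 ^ p * a ^ p + 2 ^ p * b ^ p := by ring

lemma aux_cyl {X Y Z W : Type*}
    [NormedAddCommGroup X] [NormedSpace ℝ X]
    [NormedAddCommGroup Y] [NormedSpace ℝ Y]
    [NormedAddCommGroup Z] [NormedSpace ℝ Z]
    [NormedAddCommGroup W] [NormedSpace ℝ W]
    {k i : ℕ} (hik : i ≤ k)
    (E : X →L[ℝ] Z) {g : Z → W} (hg : ContDiff ℝ k g) (D : W →L[ℝ] Y) (x : X)
    (h : Fin i → X) :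
    iteratedFDeriv ℝ i (fun x => D (g (E x))) x h
      = D (iteratedFDeriv ℝ i g (E x) fun r => E (h r)) := by
  have hi : (i : WithTop ℕ∞) ≤ (k : ℕ) := by exact_mod_cast hik
  have hDg : ContDiff ℝ k (⇑D ∘ g) := D.contDiff.comp hg
  have h1 : (fun x => D (g (E x))) = (⇑D ∘ g) ∘ ⇑E := rfl
  rw [h1, ContinuousLinearMap.iteratedFDeriv_comp_right E hDg x hi]
  simp only [ContinuousMultilinearMap.compContinuousLinearMap_apply]
  rw [ContinuousLinearMap.iteratedFDeriv_comp_left D (hg.contDiffAt (x := E x)) hi]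
  simp

lemma aux_ptbound {X Y Z W : Type*}
    [NormedAddCommGroup X] [NormedSpace ℝ X]
    [NormedAddCommGroup Y] [NormedSpace ℝ Y]
    [NormedAddCommGroup Z] [NormedSpace ℝ Z]
    [NormedAddCommGroup W] [NormedSpace ℝ W]
    {i : ℕ} {p : ℝ} (hp0 : 0 ≤ p)
    (D : W →L[ℝ] Y) (E : X →L[ℝ] Z)
    (M₁ M₂ : ContinuousMultilinearMap ℝ (fun _ : Fin i => Z) W)
    (h : Fin i → X) :
    (‖D (M₁ fun r => E (h r)) - D (M₂ fun r => E (h r))‖₊ : ℝ≥0∞) ^ p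
      ≤ ((‖D‖₊ : ℝ≥0∞) ^ p * ((max (‖E‖₊ : ℝ≥0∞) 1) ^ i) ^ p) *
        ((‖M₁ - M₂‖₊ : ℝ≥0∞) ^ p * ∏ r, (‖h r‖₊ : ℝ≥0∞) ^ p) := by
  set eE : ℝ≥0∞ := max (‖E‖₊ : ℝ≥0∞) 1 with heE
  have key : (‖D (M₁ fun r => E (h r)) - D (M₂ fun r => E (h r))‖₊ : ℝ≥0∞)
      ≤ (‖D‖₊ : ℝ≥0∞) * ((‖M₁ - M₂‖₊ : ℝ≥0∞) * (eE ^ i * ∏ r, (‖h r‖₊ : ℝ≥0∞))) := by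
    rw [← map_sub, ← ContinuousMultilinearMap.sub_apply]
    calc ((‖D ((M₁ - M₂) fun r => E (h r))‖₊ : ℝ≥0∞))
        ≤ (‖D‖₊ : ℝ≥0∞) * ‖(M₁ - M₂) fun r => E (h r)‖₊ := by
          exact_mod_cast D.le_opNNNorm _
      _ ≤ (‖D‖₊ : ℝ≥0∞) * ((‖M₁ - M₂‖₊ : ℝ≥0∞) * ∏ r, (‖E (h r)‖₊ : ℝ≥0∞)) := by
          refine mul_le_mul_right ?_ _
          exact_mod_cast (M₁ - M₂).le_opNNNorm _
      _ ≤ (‖D‖₊ : ℝ≥0∞) * ((‖M₁ - M₂‖₊ : ℝ≥0∞) * ∏ r, (eE * (‖h r‖₊ : ℝ≥0∞))) := by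
          refine mul_le_mul_right (mul_le_mul_right
            (Finset.prod_le_prod' fun r _ => ?_) _) _
          calc ((‖E (h r)‖₊ : ℝ≥0∞)) ≤ (‖E‖₊ : ℝ≥0∞) * ‖h r‖₊ := by
                exact_mod_cast E.le_opNNNorm _
            _ ≤ eE * ‖h r‖₊ := mul_le_mul_left (le_max_left _ _) _
      _ = (‖D‖₊ : ℝ≥0∞) * ((‖M₁ - M₂‖₊ : ℝ≥0∞) * (eE ^ i * ∏ r, (‖h r‖₊ : ℝ≥0∞))) := by
          rw [Finset.prod_mul_distrib, Finset.prod_const, Finset.card_univ, Fintype.card_fin]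
  calc (‖D (M₁ fun r => E (h r)) - D (M₂ fun r => E (h r))‖₊ : ℝ≥0∞) ^ p
      ≤ ((‖D‖₊ : ℝ≥0∞) * ((‖M₁ - M₂‖₊ : ℝ≥0∞) * (eE ^ i * ∏ r, (‖h r‖₊ : ℝ≥0∞)))) ^ p :=
        ENNReal.rpow_le_rpow key hp0
    _ = ((‖D‖₊ : ℝ≥0∞) ^ p * ((eE ^ i) ^ p)) *
        ((‖M₁ - M₂‖₊ : ℝ≥0∞) ^ p * ∏ r, (‖h r‖₊ : ℝ≥0∞) ^ p) := by
        rw [ENNReal.mul_rpow_of_nonneg _ _ hp0, ENNReal.mul_rpow_of_nonneg _ _ hp0,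
          ENNReal.mul_rpow_of_nonneg _ _ hp0, ENNReal.prod_rpow_of_nonneg hp0]
        ring

end Aux

theorem stmt_13 {X Y : Type*} [NormedAddCommGroup X] [NormedSpace ℝ X] [CompleteSpace X]
    [NormedAddCommGroup Y] [NormedSpace ℝ Y] [CompleteSpace Y]
    [MeasurableSpace X] [BorelSpace X]
    (k : ℕ) (p : ℝ) (hp : 1 ≤ p)
    (μ : Measure (X × (Fin k → X))) [IsFiniteMeasure μ]
    (C : ℕ → ℝ) (hCpos : ∀ i, 1 ≤ i → i ≤ k → 0 < C i)
    (hRNfin : ∀ i, 1 ≤ i → ∀ hik : i ≤ k,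
      ∫⁻ z, ∏ r, (‖z.2 r‖₊ : ℝ≥0∞) ^ p ∂(marginalUpTo μ i hik) < ⊤)
    (hRNdom : ∀ i, 1 ≤ i → ∀ hik : i ≤ k, ∀ A : Set X, MeasurableSet A →
      ∫⁻ z in Prod.fst ⁻¹' A, ∏ r, (‖z.2 r‖₊ : ℝ≥0∞) ^ p ∂(marginalUpTo μ i hik) ≤
        ENNReal.ofReal (C i) * (μ.map Prod.fst) A)
    (𝒩 : (N N' : ℕ) → Set ((Fin N → ℝ) → (Fin N' → ℝ)))
    (h𝒩smooth : ∀ N N', ∀ f ∈ 𝒩 N N', ContDiff ℝ k f)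
    (h𝒩dense : ∀ (N N' : ℕ) (ν : Measure (Fin N → ℝ)), IsFiniteMeasure ν →
      ∀ g : (Fin N → ℝ) → (Fin N' → ℝ), ContDiff ℝ k g →
      (∀ i ≤ k, ∫⁻ y, (‖iteratedFDeriv ℝ i g y‖₊ : ℝ≥0∞) ^ p ∂ν < ⊤) →
      ∀ ε : ℝ, 0 < ε → ∃ f ∈ 𝒩 N N', ∀ i ≤ k,
        ∫⁻ y, (‖iteratedFDeriv ℝ i g y - iteratedFDeriv ℝ i f y‖₊ : ℝ≥0∞) ^ p ∂ν <
          ENNReal.ofReal (ε ^ p))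
    (F : X → Y) (hF : ContDiff ℝ k F)
    (hFW : ∀ i, ∀ hik : i ≤ k,
      ∫⁻ z, (‖iteratedFDeriv ℝ i F z.1 z.2‖₊ : ℝ≥0∞) ^ p ∂(marginalUpTo μ i hik) < ⊤)
    (NN NN' : ℕ → ℕ)
    (En : ∀ n : ℕ, X →L[ℝ] (Fin (NN n) → ℝ))
    (fn : ∀ n : ℕ, (Fin (NN n) → ℝ) → (Fin (NN' n) → ℝ))
    (Dn : ∀ n : ℕ, (Fin (NN' n) → ℝ) →L[ℝ] Y)
    (hfn : ∀ n, ContDiff ℝ k (fn n))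
    (hfnW : ∀ n, ∀ i ≤ k,
      ∫⁻ y, (‖iteratedFDeriv ℝ i (fn n) y‖₊ : ℝ≥0∞) ^ p
        ∂((μ.map Prod.fst).map (En n)) < ⊤)
    (hconv : Tendsto (fun n =>
        ⨆ i : Fin (k + 1),
          ∫⁻ z,
            (‖iteratedFDeriv ℝ (i : ℕ) F z.1 z.2 -
                iteratedFDeriv ℝ (i : ℕ) (fun x : X => Dn n (fn n (En n x))) z.1
                  z.2‖₊ : ℝ≥0∞) ^ p
          ∂(marginalUpTo μ (i : ℕ) i.is_le)) atTop (𝓝 0))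
    (ε : ℝ) (hε : 0 < ε) :
    ∃ (N N' : ℕ) (E : X →L[ℝ] (Fin N → ℝ)) (D : (Fin N' → ℝ) →L[ℝ] Y)
      (f : (Fin N → ℝ) → (Fin N' → ℝ)), f ∈ 𝒩 N N' ∧
      ∀ i, ∀ hik : i ≤ k,
        ∫⁻ z,
            (‖iteratedFDeriv ℝ i F z.1 z.2 -
                iteratedFDeriv ℝ i (fun x : X => D (f (E x))) z.1 z.2‖₊ : ℝ≥0∞) ^ p
          ∂(marginalUpTo μ i hik) < ENNReal.ofReal (ε ^ p) := by
  classical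
  have hp0 : (0 : ℝ) ≤ p := le_trans zero_le_one hp
  have hpne : p ≠ 0 := by positivity
  set T : ℝ≥0∞ := ENNReal.ofReal (ε ^ p) with hTdef
  have hTpos : 0 < T := ENNReal.ofReal_pos.2 (Real.rpow_pos_of_pos hε p)
  have hTne : T ≠ ⊤ := ENNReal.ofReal_ne_top
  have h2p_ne_top : (2 : ℝ≥0∞) ^ p ≠ ⊤ :=
    ENNReal.rpow_ne_top_of_nonneg hp0 (by norm_num)
  have h2p1_ne_top : (2 : ℝ≥0∞) ^ (p + 1) ≠ ⊤ :=
    ENNReal.rpow_ne_top_of_nonneg (by linarith) (by norm_num)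
  have h2p1_ne_zero : (2 : ℝ≥0∞) ^ (p + 1) ≠ 0 := by
    simp [ENNReal.rpow_eq_zero_iff]
  set δ : ℝ≥0∞ := T / 2 ^ (p + 1) with hδdef
  have hδpos : 0 < δ := ENNReal.div_pos hTpos.ne' h2p1_ne_top
  have hδne : δ ≠ ⊤ := (ENNReal.div_lt_top hTne h2p1_ne_zero).ne
  obtain ⟨n, hn⟩ := (hconv.eventually (Iio_mem_nhds hδpos)).exists
  haveI : IsFiniteMeasure (μ.map Prod.fst) := Measure.isFiniteMeasure_map μ _
  haveI hνfin : IsFiniteMeasure ((μ.map Prod.fst).map (En n)) :=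
    Measure.isFiniteMeasure_map _ _
  -- constants
  set Dop : ℝ≥0∞ := (‖Dn n‖₊ : ℝ≥0∞) with hDop
  set Eop : ℝ≥0∞ := max ((‖En n‖₊ : ℝ≥0∞)) 1 with hEop
  have hEop_ne_top : Eop ≠ ⊤ := by
    rw [hEop]
    exact (max_lt ENNReal.coe_lt_top ENNReal.one_lt_top).ne
  have hEop_one : 1 ≤ Eop := le_max_right _ _
  set K0 : ℝ≥0∞ := Dop ^ p * (Eop ^ k) ^ p with hK0
  have hK0ne : K0 ≠ ⊤ := by
    rw [hK0]
    exact ENNReal.mul_ne_top (ENNReal.rpow_ne_top_of_nonneg hp0 ENNReal.coe_ne_top)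
      (ENNReal.rpow_ne_top_of_nonneg hp0 (ENNReal.pow_ne_top hEop_ne_top))
  set Ctot : ℝ≥0∞ := 1 + ∑ j ∈ Finset.Icc 1 k, ENNReal.ofReal (C j) with hCtot
  have hCtot_ne : Ctot ≠ ⊤ := by
    rw [hCtot]
    refine ENNReal.add_ne_top.2 ⟨ENNReal.one_ne_top, ?_⟩
    exact (ENNReal.sum_lt_top.2 fun j _ => ENNReal.ofReal_lt_top).ne
  set K : ℝ≥0∞ := K0 * Ctot with hK
  have hKne : K ≠ ⊤ := ENNReal.mul_ne_top hK0ne hCtot_ne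
  have hK1ne : K + 1 ≠ ⊤ := ENNReal.add_ne_top.2 ⟨hKne, ENNReal.one_ne_top⟩
  have hK1nz : K + 1 ≠ 0 := by simp
  -- the tolerance for the finite-dimensional approximation
  have hQpos : 0 < δ / (K + 1) := ENNReal.div_pos hδpos.ne' hK1ne
  have hQne : δ / (K + 1) ≠ ⊤ := (ENNReal.div_lt_top hδne hK1nz).ne
  set t : ℝ := (δ / (K + 1)).toReal with htdef
  have ht : 0 < t := ENNReal.toReal_pos hQpos.ne' hQne
  have hofReal_t : ENNReal.ofReal t = δ / (K + 1) := ENNReal.ofReal_toReal hQne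
  set η : ℝ := t ^ (1 / p) with hηdef
  have hη : 0 < η := Real.rpow_pos_of_pos ht _
  have hηp : η ^ p = t := by
    rw [hηdef, ← Real.rpow_mul ht.le, one_div, inv_mul_cancel₀ hpne, Real.rpow_one]
  obtain ⟨f, hf𝒩, hfapp⟩ := h𝒩dense (NN n) (NN' n) ((μ.map Prod.fst).map (En n))
    hνfin (fn n) (hfn n) (hfnW n) η hη
  have hfapp' : ∀ i ≤ k,
      ∫⁻ y, (‖iteratedFDeriv ℝ i (fn n) y - iteratedFDeriv ℝ i f y‖₊ : ℝ≥0∞) ^ p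
        ∂((μ.map Prod.fst).map (En n)) < ENNReal.ofReal t := by
    intro i hik
    have := hfapp i hik
    rwa [hηp] at this
  refine ⟨NN n, NN' n, En n, Dn n, f, hf𝒩, ?_⟩
  intro i hik
  have hi : (i : WithTop ℕ∞) ≤ (k : ℕ) := by exact_mod_cast hik
  have hf_smooth : ContDiff ℝ k f := h𝒩smooth _ _ f hf𝒩
  -- the first error term, from `hconv`
  have hA : ∫⁻ z, (‖iteratedFDeriv ℝ i F z.1 z.2 -
        iteratedFDeriv ℝ i (fun x : X => Dn n (fn n (En n x))) z.1 z.2‖₊ : ℝ≥0∞) ^ p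
      ∂(marginalUpTo μ i hik) < δ := by
    have h1 := le_iSup (fun j : Fin (k + 1) =>
      ∫⁻ z, (‖iteratedFDeriv ℝ (j : ℕ) F z.1 z.2 -
          iteratedFDeriv ℝ (j : ℕ) (fun x : X => Dn n (fn n (En n x))) z.1 z.2‖₊ : ℝ≥0∞) ^ p
        ∂(marginalUpTo μ (j : ℕ) j.is_le)) (⟨i, Nat.lt_succ_of_le hik⟩ : Fin (k + 1))
    exact lt_of_le_of_lt h1 hn
  -- measurability facts
  have hw : Measurable fun z : X × (Fin i → X) => ∏ r, ((‖z.2 r‖₊ : ℝ≥0∞)) ^ p := by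
    refine Finset.measurable_prod _ fun r _ => ?_
    have h1 : Measurable fun z : X × (Fin i → X) => (‖z.2 r‖₊ : ℝ≥0∞) :=
      measurable_coe_nnreal_ennreal.comp ((measurable_pi_apply r).comp measurable_snd).nnnorm
    exact ENNReal.continuous_rpow_const.measurable.comp h1
  have hψcont : Continuous fun y : Fin (NN n) → ℝ =>
      (‖iteratedFDeriv ℝ i (fn n) y - iteratedFDeriv ℝ i f y‖₊ : ℝ≥0∞) ^ p := by
    refine ENNReal.continuous_rpow_const.comp (ENNReal.continuous_coe.comp ?_)
    exact (((hfn n).continuous_iteratedFDeriv hi).sub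
      (hf_smooth.continuous_iteratedFDeriv hi)).nnnorm
  have hψ : Measurable fun y : Fin (NN n) → ℝ =>
      (‖iteratedFDeriv ℝ i (fn n) y - iteratedFDeriv ℝ i f y‖₊ : ℝ≥0∞) ^ p :=
    hψcont.measurable
  have hEnmeas : Measurable (En n) := (En n).continuous.measurable
  have hφ : Measurable fun x : X =>
      (‖iteratedFDeriv ℝ i (fn n) (En n x) - iteratedFDeriv ℝ i f (En n x)‖₊ : ℝ≥0∞) ^ p :=
    hψ.comp hEnmeas
  -- chain rule rewriting for cylindrical maps
  have hcylfn : ∀ z : X × (Fin i → X),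
      iteratedFDeriv ℝ i (fun x : X => Dn n (fn n (En n x))) z.1 z.2
        = Dn n (iteratedFDeriv ℝ i (fn n) (En n z.1) fun r => En n (z.2 r)) :=
    fun z => aux_cyl hik (En n) (hfn n) (Dn n) z.1 z.2
  have hcylf : ∀ z : X × (Fin i → X),
      iteratedFDeriv ℝ i (fun x : X => Dn n (f (En n x))) z.1 z.2
        = Dn n (iteratedFDeriv ℝ i f (En n z.1) fun r => En n (z.2 r)) :=
    fun z => aux_cyl hik (En n) hf_smooth (Dn n) z.1 z.2
  -- measurability of the cylindrical error term
  have hBmeas : Measurable fun z : X × (Fin i → X) =>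
      (‖iteratedFDeriv ℝ i (fun x : X => Dn n (fn n (En n x))) z.1 z.2 -
          iteratedFDeriv ℝ i (fun x : X => Dn n (f (En n x))) z.1 z.2‖₊ : ℝ≥0∞) ^ p := by
    have heq : (fun z : X × (Fin i → X) =>
        (‖iteratedFDeriv ℝ i (fun x : X => Dn n (fn n (En n x))) z.1 z.2 -
            iteratedFDeriv ℝ i (fun x : X => Dn n (f (En n x))) z.1 z.2‖₊ : ℝ≥0∞) ^ p)
        = (fun w : (Fin (NN n) → ℝ) × (Fin i → Fin (NN n) → ℝ) =>
            (‖Dn n (iteratedFDeriv ℝ i (fn n) w.1 w.2) -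
                Dn n (iteratedFDeriv ℝ i f w.1 w.2)‖₊ : ℝ≥0∞) ^ p) ∘
          (fun z : X × (Fin i → X) => (En n z.1, fun r => En n (z.2 r))) := by
      funext z
      simp only [Function.comp_apply, hcylfn z, hcylf z]
    rw [heq]
    have hΘ : Continuous fun w : (Fin (NN n) → ℝ) × (Fin i → Fin (NN n) → ℝ) =>
        (‖Dn n (iteratedFDeriv ℝ i (fn n) w.1 w.2) -
            Dn n (iteratedFDeriv ℝ i f w.1 w.2)‖₊ : ℝ≥0∞) ^ p := by
      refine ENNReal.continuous_rpow_const.comp (ENNReal.continuous_coe.comp ?_)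
      refine Continuous.nnnorm (Continuous.sub ?_ ?_)
      · exact (Dn n).continuous.comp
          ((((hfn n).continuous_iteratedFDeriv hi).comp continuous_fst).eval continuous_snd)
      · exact (Dn n).continuous.comp
          (((hf_smooth.continuous_iteratedFDeriv hi).comp continuous_fst).eval continuous_snd)
    refine hΘ.measurable.comp ?_
    exact (hEnmeas.comp measurable_fst).prodMk
      (measurable_pi_lambda _ fun r =>
        hEnmeas.comp ((measurable_pi_apply r).comp measurable_snd))
  -- the domination constant for this index
  set cE : ℝ≥0∞ := if i = 0 then 1 else ENNReal.ofReal (C i) with hcE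
  have hcE_le : cE ≤ Ctot := by
    rw [hcE, hCtot]
    by_cases h0 : i = 0
    · simp [h0]
    · simp only [h0, if_false]
      refine le_add_of_nonneg_of_le zero_le ?_
      exact Finset.single_le_sum (f := fun j => ENNReal.ofReal (C j))
        (fun j _ => zero_le) (Finset.mem_Icc.2 ⟨Nat.one_le_iff_ne_zero.2 h0, hik⟩)
  have hdom : ∀ A : Set X, MeasurableSet A →
      ∫⁻ z in Prod.fst ⁻¹' A, (∏ r, (‖z.2 r‖₊ : ℝ≥0∞) ^ p) ∂(marginalUpTo μ i hik)
        ≤ cE * (μ.map Prod.fst) A := by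
    intro A hAs
    by_cases h0 : i = 0
    · subst h0
      rw [hcE, if_pos rfl, one_mul]
      refine le_of_eq ?_
      have hqmeas : Measurable fun z : X × (Fin k → X) =>
          (z.1, fun j : Fin 0 => z.2 (Fin.castLE hik j)) :=
        measurable_fst.prodMk (measurable_pi_lambda _ fun j =>
          (measurable_pi_apply _).comp measurable_snd)
      have h1 : ∀ z : X × (Fin 0 → X), (∏ r, (‖z.2 r‖₊ : ℝ≥0∞) ^ p) = 1 := by
        intro z; simp
      calc ∫⁻ z in Prod.fst ⁻¹' A, (∏ r, (‖z.2 r‖₊ : ℝ≥0∞) ^ p) ∂(marginalUpTo μ 0 hik)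
          = ∫⁻ _ in Prod.fst ⁻¹' A, 1 ∂(marginalUpTo μ 0 hik) :=
            setLIntegral_congr_fun (measurable_fst hAs) (fun z _ => h1 z)
        _ = marginalUpTo μ 0 hik (Prod.fst ⁻¹' A) := setLIntegral_one _
        _ = (μ.map Prod.fst) A := by
            rw [marginalUpTo, Measure.map_apply hqmeas (measurable_fst hAs),
              Measure.map_apply measurable_fst hAs]
            rfl
    · have := hRNdom i (Nat.one_le_iff_ne_zero.2 h0) hik A hAs
      rw [hcE]
      simpa [h0] using this
  -- the second error term: cylindrical approximation by `f`
  have hB : ∫⁻ z, (‖iteratedFDeriv ℝ i (fun x : X => Dn n (fn n (En n x))) z.1 z.2 -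
        iteratedFDeriv ℝ i (fun x : X => Dn n (f (En n x))) z.1 z.2‖₊ : ℝ≥0∞) ^ p
      ∂(marginalUpTo μ i hik) ≤ δ := by
    have hpt : ∀ z : X × (Fin i → X),
        (‖iteratedFDeriv ℝ i (fun x : X => Dn n (fn n (En n x))) z.1 z.2 -
            iteratedFDeriv ℝ i (fun x : X => Dn n (f (En n x))) z.1 z.2‖₊ : ℝ≥0∞) ^ p
          ≤ (Dop ^ p * ((Eop ^ i) ^ p)) *
            ((‖iteratedFDeriv ℝ i (fn n) (En n z.1) -
                iteratedFDeriv ℝ i f (En n z.1)‖₊ : ℝ≥0∞) ^ p *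
              ∏ r, (‖z.2 r‖₊ : ℝ≥0∞) ^ p) := by
      intro z
      rw [hcylfn z, hcylf z]
      exact aux_ptbound hp0 (Dn n) (En n) _ _ z.2
    have hstep1 : ∫⁻ z, (‖iteratedFDeriv ℝ i (fun x : X => Dn n (fn n (En n x))) z.1 z.2 -
          iteratedFDeriv ℝ i (fun x : X => Dn n (f (En n x))) z.1 z.2‖₊ : ℝ≥0∞) ^ p
        ∂(marginalUpTo μ i hik)
        ≤ (Dop ^ p * ((Eop ^ i) ^ p)) *
          ∫⁻ z, ((‖iteratedFDeriv ℝ i (fn n) (En n z.1) -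
              iteratedFDeriv ℝ i f (En n z.1)‖₊ : ℝ≥0∞) ^ p *
            ∏ r, (‖z.2 r‖₊ : ℝ≥0∞) ^ p) ∂(marginalUpTo μ i hik) := by
      refine le_trans (lintegral_mono hpt) ?_
      rw [lintegral_const_mul' _ _ (ENNReal.mul_ne_top
        (ENNReal.rpow_ne_top_of_nonneg hp0 ENNReal.coe_ne_top)
        (ENNReal.rpow_ne_top_of_nonneg hp0 (ENNReal.pow_ne_top hEop_ne_top)))]
    have hstep2 : ∫⁻ z, ((‖iteratedFDeriv ℝ i (fn n) (En n z.1) -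
          iteratedFDeriv ℝ i f (En n z.1)‖₊ : ℝ≥0∞) ^ p *
        ∏ r, (‖z.2 r‖₊ : ℝ≥0∞) ^ p) ∂(marginalUpTo μ i hik)
        ≤ cE * ∫⁻ y, (‖iteratedFDeriv ℝ i (fn n) y -
            iteratedFDeriv ℝ i f y‖₊ : ℝ≥0∞) ^ p ∂((μ.map Prod.fst).map (En n)) := by
      have := aux_dom (marginalUpTo μ i hik) (μ.map Prod.fst)
        (fun z => ∏ r, (‖z.2 r‖₊ : ℝ≥0∞) ^ p) hw cE hdom
        (fun x => (‖iteratedFDeriv ℝ i (fn n) (En n x) -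
          iteratedFDeriv ℝ i f (En n x)‖₊ : ℝ≥0∞) ^ p) hφ
      refine this.trans (le_of_eq ?_)
      rw [lintegral_map hψ hEnmeas]
    have hXipow : (Eop ^ i) ^ p ≤ (Eop ^ k) ^ p :=
      ENNReal.rpow_le_rpow (pow_le_pow_right₀ hEop_one hik) hp0
    calc ∫⁻ z, (‖iteratedFDeriv ℝ i (fun x : X => Dn n (fn n (En n x))) z.1 z.2 -
          iteratedFDeriv ℝ i (fun x : X => Dn n (f (En n x))) z.1 z.2‖₊ : ℝ≥0∞) ^ p
        ∂(marginalUpTo μ i hik)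
        ≤ (Dop ^ p * ((Eop ^ i) ^ p)) *
          (cE * ∫⁻ y, (‖iteratedFDeriv ℝ i (fn n) y -
              iteratedFDeriv ℝ i f y‖₊ : ℝ≥0∞) ^ p ∂((μ.map Prod.fst).map (En n))) :=
          hstep1.trans (mul_le_mul_right hstep2 _)
      _ ≤ (Dop ^ p * ((Eop ^ k) ^ p)) * (Ctot * ENNReal.ofReal t) := by
          refine mul_le_mul' (mul_le_mul_right hXipow _) (mul_le_mul' hcE_le ?_)
          exact (hfapp' i hik).le
      _ = K * ENNReal.ofReal t := by rw [hK, hK0]; ring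
      _ = K * (δ / (K + 1)) := by rw [hofReal_t]
      _ ≤ (K + 1) * (δ / (K + 1)) := mul_le_mul_left (le_add_of_nonneg_right zero_le) _
      _ = δ := ENNReal.mul_div_cancel hK1nz hK1ne
  -- combine the two error terms
  calc ∫⁻ z, (‖iteratedFDeriv ℝ i F z.1 z.2 -
        iteratedFDeriv ℝ i (fun x : X => Dn n (f (En n x))) z.1 z.2‖₊ : ℝ≥0∞) ^ p
      ∂(marginalUpTo μ i hik)
      ≤ ∫⁻ z, (2 ^ p * (‖iteratedFDeriv ℝ i F z.1 z.2 -
            iteratedFDeriv ℝ i (fun x : X => Dn n (fn n (En n x))) z.1 z.2‖₊ : ℝ≥0∞) ^ p +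
          2 ^ p * (‖iteratedFDeriv ℝ i (fun x : X => Dn n (fn n (En n x))) z.1 z.2 -
            iteratedFDeriv ℝ i (fun x : X => Dn n (f (En n x))) z.1 z.2‖₊ : ℝ≥0∞) ^ p)
        ∂(marginalUpTo μ i hik) := by
        refine lintegral_mono fun z => ?_
        have htri : (‖iteratedFDeriv ℝ i F z.1 z.2 -
            iteratedFDeriv ℝ i (fun x : X => Dn n (f (En n x))) z.1 z.2‖₊ : ℝ≥0∞)
            ≤ (‖iteratedFDeriv ℝ i F z.1 z.2 -
                iteratedFDeriv ℝ i (fun x : X => Dn n (fn n (En n x))) z.1 z.2‖₊ : ℝ≥0∞) +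
              (‖iteratedFDeriv ℝ i (fun x : X => Dn n (fn n (En n x))) z.1 z.2 -
                iteratedFDeriv ℝ i (fun x : X => Dn n (f (En n x))) z.1 z.2‖₊ : ℝ≥0∞) := by
          rw [← ENNReal.coe_add]
          refine ENNReal.coe_le_coe.2 ?_
          calc ‖iteratedFDeriv ℝ i F z.1 z.2 -
              iteratedFDeriv ℝ i (fun x : X => Dn n (f (En n x))) z.1 z.2‖₊
              = ‖(iteratedFDeriv ℝ i F z.1 z.2 -
                  iteratedFDeriv ℝ i (fun x : X => Dn n (fn n (En n x))) z.1 z.2) +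
                (iteratedFDeriv ℝ i (fun x : X => Dn n (fn n (En n x))) z.1 z.2 -
                  iteratedFDeriv ℝ i (fun x : X => Dn n (f (En n x))) z.1 z.2)‖₊ := by
                rw [sub_add_sub_cancel]
            _ ≤ _ := nnnorm_add_le _ _
        exact le_trans (ENNReal.rpow_le_rpow htri hp0) (aux_rpow_add hp0 _ _)
    _ = 2 ^ p * (∫⁻ z, (‖iteratedFDeriv ℝ i F z.1 z.2 -
          iteratedFDeriv ℝ i (fun x : X => Dn n (fn n (En n x))) z.1 z.2‖₊ : ℝ≥0∞) ^ p
        ∂(marginalUpTo μ i hik)) +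
        2 ^ p * (∫⁻ z, (‖iteratedFDeriv ℝ i (fun x : X => Dn n (fn n (En n x))) z.1 z.2 -
          iteratedFDeriv ℝ i (fun x : X => Dn n (f (En n x))) z.1 z.2‖₊ : ℝ≥0∞) ^ p
        ∂(marginalUpTo μ i hik)) := by
        rw [lintegral_add_right _ (hBmeas.const_mul _),
          lintegral_const_mul' _ _ h2p_ne_top, lintegral_const_mul' _ _ h2p_ne_top]
    _ < 2 ^ p * δ + 2 ^ p * δ := by
        refine ENNReal.add_lt_add_of_lt_of_le ?_ ?_ ?_
        · exact ne_top_of_le_ne_top (ENNReal.mul_ne_top h2p_ne_top hδne)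
            (mul_le_mul_right hB _)
        · exact (ENNReal.mul_lt_mul_iff_right (by simp [ENNReal.rpow_eq_zero_iff])
            h2p_ne_top).2 hA
        · exact mul_le_mul_right hB _
    _ = T := by
        rw [← two_mul, ← mul_assoc]
        have h2 : (2 : ℝ≥0∞) * 2 ^ p = 2 ^ (p + 1) := by
          rw [ENNReal.rpow_add p 1 (by norm_num) (by norm_num), ENNReal.rpow_one, mul_comm]
        rw [h2, hδdef, ENNReal.mul_div_cancel h2p1_ne_zero h2p1_ne_top]
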